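/- Let s ≤ m be positive integers with x_1 ≤ ... ≤ x_s nonnegative reals, and Ω as above. Then Σ_{j=1}^s x_j^m − (s/Ω)·Σ_{k_j ≥ 1, Σk_j=m} (m!/(k_1!⋯k_s!)) x_1^{k_1}⋯x_s^{k_s} ≥ (s/m) · Σ_{j=1}^{⌊s/2⌋} (√(x_j^m) − √(x_{s+1-j}^m))². -/

import Mathlib

open Finset Real


lemma sum_Icc_eq_sum_fin (s : ℕ) (f : ℕ → ℝ) :
    ∑ j ∈ Finset.Icc 1 s, f j = ∑ j : Fin s, f (j.val + 1) := by
  rw [Fin.sum_univ_eq_sum_range (fun j => f (j+1)) s]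
  rw [show Finset.Icc 1 s = Finset.Ico 1 (s+1) by rw [Finset.Ico_add_one_right_eq_Icc]]
  rw [Finset.sum_Ico_eq_sum_range]
  simp [add_comm]

lemma reflect_sum (s : ℕ) (f : ℕ → ℝ) :
    ∑ j ∈ Finset.Icc 1 s, f j =
      (∑ j ∈ Finset.Icc 1 (s/2), (f j + f (s+1-j))) +
        (if s % 2 = 1 then f (s/2 + 1) else 0) := by
  have h1 : (0:ℕ) ≤ s/2 := Nat.zero_le _
  have h2 : s / 2 ≤ s - s / 2 := by omega
  have h3 : s - s / 2 ≤ s := by omega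
  rw [show Finset.Icc 1 s = Finset.Ioc 0 s from (Finset.Icc_add_one_left_eq_Ioc 0 s)]
  rw [← Finset.sum_Ioc_consecutive f h1 (h2.trans h3)]
  rw [← Finset.sum_Ioc_consecutive f h2 h3]
  have hrefl : ∑ j ∈ Finset.Ioc (s - s/2) s, f j = ∑ j ∈ Finset.Ioc 0 (s/2), f (s+1-j) := by
    refine Finset.sum_nbij' (fun j => s + 1 - j) (fun j => s + 1 - j) ?_ ?_ ?_ ?_ ?_ <;>
      simp only [Finset.mem_Ioc] <;> intro a ha
    · omega
    · omega
    · omega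
    · omega
    · congr 1; omega
  have hmid : ∑ j ∈ Finset.Ioc (s/2) (s - s/2), f j = (if s % 2 = 1 then f (s/2 + 1) else 0) := by
    rcases Nat.mod_two_eq_zero_or_one s with he | ho
    · have : s - s/2 = s/2 := by omega
      rw [this, Finset.Ioc_self, Finset.sum_empty, if_neg (by omega)]
    · have : s - s/2 = s/2 + 1 := by omega
      rw [this, Nat.Ioc_succ_singleton, Finset.sum_singleton, if_pos (by omega)]
  rw [hrefl, hmid, Finset.sum_add_distrib]
  rw [show Finset.Icc 1 (s/2) = Finset.Ioc 0 (s/2) from (Finset.Icc_add_one_left_eq_Ioc 0 _)]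
  ring

lemma key_amgm (s m : ℕ) (hm : 0 < m) (y : Fin s → ℝ) (hy : ∀ j, 0 ≤ y j)
    (k : Fin s → ℕ) (hk1 : ∀ j, 1 ≤ k j) (hksum : ∑ j, k j = m) :
    ∏ j, y j ^ k j ≤
      (1/(m:ℝ)) * ((∑ j, ((k j : ℝ) - 1) * y j ^ m) +
        ∑ j, Real.sqrt (y j ^ m * y (Fin.rev j) ^ m)) := by
  have hm0 : (m:ℝ) ≠ 0 := Nat.cast_ne_zero.mpr hm.ne'
  set w : Fin s ⊕ Fin s → ℝ := Sum.elim (fun j => ((k j : ℝ) - 1)/m) (fun _ => 1/m) with hw_def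
  set z : Fin s ⊕ Fin s → ℝ :=
    Sum.elim (fun j => y j ^ m) (fun j => Real.sqrt (y j ^ m * y (Fin.rev j) ^ m)) with hz_def
  have hksumR : ∑ j, (k j : ℝ) = m := by exact_mod_cast hksum
  have hw : ∀ i ∈ Finset.univ, 0 ≤ w i := by
    rintro (j | j) _
    · have : (1:ℝ) ≤ (k j : ℝ) := by exact_mod_cast hk1 j
      simp only [hw_def, Sum.elim_inl]
      exact div_nonneg (by linarith) (Nat.cast_nonneg m)
    · simp only [hw_def, Sum.elim_inr]
      positivity
  have hw' : ∑ i, w i = 1 := by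
    rw [Fintype.sum_sum_type]
    simp only [hw_def, Sum.elim_inl, Sum.elim_inr]
    rw [Finset.sum_const, ← Finset.sum_div, Finset.sum_sub_distrib, hksumR]
    simp only [Finset.sum_const, Finset.card_univ, Fintype.card_fin, nsmul_eq_mul, mul_one]
    field_simp
    ring
  have hz : ∀ i ∈ Finset.univ, 0 ≤ z i := by
    rintro (j | j) _
    · exact pow_nonneg (hy j) m
    · exact Real.sqrt_nonneg _
  have H := Real.geom_mean_le_arith_mean_weighted Finset.univ w z hw hw' hz
  rw [Fintype.prod_sum_type, Fintype.sum_sum_type] at H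
  simp only [hw_def, hz_def, Sum.elim_inl, Sum.elim_inr] at H
  -- identify the LHS product
  have hL1 : ∀ j : Fin s, (y j ^ m) ^ (((k j : ℝ) - 1)/m) = y j ^ (k j - 1) := by
    intro j
    rw [← Real.rpow_natCast (y j) m, ← Real.rpow_mul (hy j)]
    rw [show (m:ℝ) * (((k j : ℝ) - 1)/m) = ((k j : ℝ) - 1) by field_simp]
    rw [show ((k j : ℝ) - 1) = ((k j - 1 : ℕ) : ℝ) by
      have := hk1 j; push_cast [Nat.cast_sub this]; ring]
    exact Real.rpow_natCast _ _
  have hL2 : ∀ j : Fin s, (Real.sqrt (y j ^ m * y (Fin.rev j) ^ m)) ^ ((1:ℝ)/m)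
      = (y j ^ m) ^ ((1:ℝ)/(2*m)) * (y (Fin.rev j) ^ m) ^ ((1:ℝ)/(2*m)) := by
    intro j
    have h1 : (0:ℝ) ≤ y j ^ m := pow_nonneg (hy j) m
    have h2 : (0:ℝ) ≤ y (Fin.rev j) ^ m := pow_nonneg (hy _) m
    rw [Real.sqrt_eq_rpow, ← Real.rpow_mul (mul_nonneg h1 h2),
      show (1/2:ℝ)*((1:ℝ)/m) = 1/(2*m) by ring, Real.mul_rpow h1 h2]
  have hprod2 : ∏ j : Fin s, ((y j ^ m) ^ ((1:ℝ)/(2*m)) * (y (Fin.rev j) ^ m) ^ ((1:ℝ)/(2*m)))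
      = ∏ j : Fin s, y j := by
    rw [Finset.prod_mul_distrib]
    have hrev : ∏ j : Fin s, (y (Fin.rev j) ^ m) ^ ((1:ℝ)/(2*m))
        = ∏ j : Fin s, (y j ^ m) ^ ((1:ℝ)/(2*m)) :=
      Fintype.prod_equiv (Fin.revPerm) _ _ (fun j => rfl)
    rw [hrev, ← Finset.prod_mul_distrib]
    apply Finset.prod_congr rfl
    intro j _
    have : (y j ^ m) ^ ((1:ℝ)/(2*m)) = Real.sqrt (y j) := by
      rw [← Real.rpow_natCast (y j) m, ← Real.rpow_mul (hy j),
        show (m:ℝ) * ((1:ℝ)/(2*m)) = 1/2 by field_simp, Real.sqrt_eq_rpow]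
    rw [this, Real.mul_self_sqrt (hy j)]
  have hLHS : (∏ j : Fin s, (y j ^ m) ^ (((k j : ℝ) - 1)/m)) *
      ∏ j : Fin s, (Real.sqrt (y j ^ m * y (Fin.rev j) ^ m)) ^ ((1:ℝ)/m)
      = ∏ j, y j ^ k j := by
    rw [Finset.prod_congr rfl (fun j _ => hL1 j), Finset.prod_congr rfl (fun j _ => hL2 j),
      hprod2, ← Finset.prod_mul_distrib]
    apply Finset.prod_congr rfl
    intro j _
    rw [← pow_succ, Nat.sub_add_cancel (hk1 j)]
  rw [hLHS] at H
  refine H.trans (le_of_eq ?_)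
  rw [mul_add, Finset.mul_sum, Finset.mul_sum]
  congr 1 <;> refine Finset.sum_congr rfl fun j _ => by ring

lemma multinomial_comp_perm {s : ℕ} (k : Fin s → ℕ) (σ : Equiv.Perm (Fin s)) :
    Nat.multinomial Finset.univ (k ∘ σ) = Nat.multinomial Finset.univ k := by
  unfold Nat.multinomial
  simp only [Function.comp]
  rw [Equiv.sum_comp σ k, Equiv.prod_comp σ (fun i => Nat.factorial (k i))]

lemma sym_sum (s m : ℕ) (i j : Fin s) :
    ∑ k ∈ (Finset.Nat.antidiagonalTuple s m).filter (fun k => ∀ j, 1 ≤ k j),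
      Nat.multinomial Finset.univ k * k i =
    ∑ k ∈ (Finset.Nat.antidiagonalTuple s m).filter (fun k => ∀ j, 1 ≤ k j),
      Nat.multinomial Finset.univ k * k j := by
  refine Finset.sum_nbij' (fun k => k ∘ (Equiv.swap i j)) (fun k => k ∘ (Equiv.swap i j))
    ?_ ?_ ?_ ?_ ?_
  · intro k hk
    simp only [Finset.mem_filter, Finset.Nat.mem_antidiagonalTuple] at hk ⊢
    exact ⟨by simpa [Function.comp] using (Equiv.sum_comp (Equiv.swap i j) k).trans hk.1,
      fun l => hk.2 _⟩
  · intro k hk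
    simp only [Finset.mem_filter, Finset.Nat.mem_antidiagonalTuple] at hk ⊢
    exact ⟨by simpa [Function.comp] using (Equiv.sum_comp (Equiv.swap i j) k).trans hk.1,
      fun l => hk.2 _⟩
  · intro k _
    ext l
    simp [Function.comp]
  · intro k _
    ext l
    simp [Function.comp]
  · intro k _
    rw [multinomial_comp_perm]
    simp [Function.comp, Equiv.swap_apply_left]

theorem edge_laplacian_form_opposite_bound (s m : ℕ) (hs : 2 ≤ s) (hsm : s ≤ m)
    (x : ℕ → ℝ) (hx : ∀ i ∈ Finset.Icc 1 s, 0 ≤ x i)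
    (hmono : ∀ i ∈ Finset.Icc 1 s, ∀ j ∈ Finset.Icc 1 s, i ≤ j → x i ≤ x j) :
    ∑ j ∈ Finset.Icc 1 s, x j ^ m -
      ((s : ℝ) /
          (∑ k ∈ (Finset.Nat.antidiagonalTuple s m).filter (fun k => ∀ j, 1 ≤ k j),
            (Nat.multinomial Finset.univ k : ℝ))) *
        ∑ k ∈ (Finset.Nat.antidiagonalTuple s m).filter (fun k => ∀ j, 1 ≤ k j),
          (Nat.multinomial Finset.univ k : ℝ) * ∏ j : Fin s, x (j.val + 1) ^ k j ≥
      ((s : ℝ) / m) *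
        ∑ j ∈ Finset.Icc 1 (s / 2),
          (Real.sqrt (x j ^ m) - Real.sqrt (x (s + 1 - j) ^ m)) ^ 2 := by
  have hs0 : 0 < s := by omega
  have hm : 0 < m := by omega
  have hm0 : (m:ℝ) ≠ 0 := Nat.cast_ne_zero.mpr hm.ne'
  set F := (Finset.Nat.antidiagonalTuple s m).filter (fun k => ∀ j, 1 ≤ k j) with hF
  set i0 : Fin s := ⟨0, hs0⟩ with hi0
  -- nonemptiness
  have hne : F.Nonempty := by
    refine ⟨fun j => 1 + (if j = i0 then m - s else 0), ?_⟩
    simp only [hF, Finset.mem_filter, Finset.Nat.mem_antidiagonalTuple]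
    refine ⟨?_, fun j => Nat.le_add_right 1 _⟩
    rw [Finset.sum_add_distrib, Finset.sum_ite_eq' Finset.univ i0 (fun _ => m - s)]
    simp only [Finset.mem_univ, if_true, Finset.sum_const, Finset.card_univ,
      Fintype.card_fin, smul_eq_mul, mul_one]
    omega
  set Ω : ℝ := ∑ k ∈ F, (Nat.multinomial Finset.univ k : ℝ) with hΩ
  have hΩpos : 0 < Ω :=
    Finset.sum_pos (fun k _ => by exact_mod_cast Nat.multinomial_pos Finset.univ k) hne
  set A := ∑ j ∈ Finset.Icc 1 s, x j ^ m with hA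
  set T := ∑ j ∈ Finset.Icc 1 (s / 2),
      (Real.sqrt (x j ^ m) - Real.sqrt (x (s + 1 - j) ^ m)) ^ 2 with hT
  set S := ∑ j ∈ Finset.Icc 1 s, Real.sqrt (x j ^ m) * Real.sqrt (x (s + 1 - j) ^ m) with hS
  have hxnn : ∀ j ∈ Finset.Icc 1 s, (0:ℝ) ≤ x j ^ m := fun j hj => pow_nonneg (hx j hj) m
  -- Lemma B : S = A - T
  have hSAT : S = A - T := by
    have hrA := reflect_sum s (fun j => x j ^ m)
    have hrS := reflect_sum s (fun j => Real.sqrt (x j ^ m) * Real.sqrt (x (s+1-j) ^ m))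
    have hpair : ∀ j ∈ Finset.Icc 1 (s/2),
        (Real.sqrt (x j ^ m) * Real.sqrt (x (s+1-j) ^ m) +
          Real.sqrt (x (s+1-j) ^ m) * Real.sqrt (x (s+1-(s+1-j)) ^ m)) =
        2 * (Real.sqrt (x j ^ m) * Real.sqrt (x (s+1-j) ^ m)) := by
      intro j hj
      simp only [Finset.mem_Icc] at hj
      rw [show s+1-(s+1-j) = j by omega]
      ring
    have hmidS : (if s % 2 = 1 then
        Real.sqrt (x (s/2+1) ^ m) * Real.sqrt (x (s+1-(s/2+1)) ^ m) else 0) =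
        (if s % 2 = 1 then x (s/2+1) ^ m else 0) := by
      by_cases hodd : s % 2 = 1
      · rw [if_pos hodd, if_pos hodd, show s+1-(s/2+1) = s/2+1 by omega,
          Real.mul_self_sqrt (hxnn (s/2+1) (by simp only [Finset.mem_Icc]; omega))]
      · rw [if_neg hodd, if_neg hodd]
    have hTexp : ∑ j ∈ Finset.Icc 1 (s/2),
        (Real.sqrt (x j ^ m) - Real.sqrt (x (s + 1 - j) ^ m)) ^ 2 =
        ∑ j ∈ Finset.Icc 1 (s/2),
        (x j ^ m + x (s+1-j) ^ m - 2 * (Real.sqrt (x j ^ m) * Real.sqrt (x (s+1-j) ^ m))) := by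
      refine Finset.sum_congr rfl fun j hj => ?_
      simp only [Finset.mem_Icc] at hj
      have h1 : (0:ℝ) ≤ x j ^ m := hxnn j (by simp only [Finset.mem_Icc]; omega)
      have h2 : (0:ℝ) ≤ x (s+1-j) ^ m := hxnn (s+1-j) (by simp only [Finset.mem_Icc]; omega)
      rw [sub_sq, Real.sq_sqrt h1, Real.sq_sqrt h2]
      ring
    rw [hS, hT, hA, hrS, hrA, Finset.sum_congr rfl hpair, hmidS, hTexp,
      Finset.sum_sub_distrib]
    simp only [← Finset.mul_sum, Finset.sum_add_distrib]
    ring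
  -- per-composition bound
  have hperk : ∀ k ∈ F, ∏ j : Fin s, x (j.val + 1) ^ k j ≤
      (1/(m:ℝ)) * ((∑ j : Fin s, ((k j : ℝ) - 1) * x (j.val+1) ^ m) + S) := by
    intro k hk
    simp only [hF, Finset.mem_filter, Finset.Nat.mem_antidiagonalTuple] at hk
    have hynn : ∀ j : Fin s, 0 ≤ x (j.val + 1) := fun j =>
      hx _ (by simp only [Finset.mem_Icc]; exact ⟨Nat.le_add_left 1 _, j.isLt⟩)
    have H := key_amgm s m hm (fun j => x (j.val + 1)) hynn k hk.2 hk.1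
    clear hk
    have hSfin : ∑ j : Fin s, Real.sqrt (x (j.val+1) ^ m * x ((Fin.rev j).val + 1) ^ m) = S := by
      rw [hS, sum_Icc_eq_sum_fin s (fun j => Real.sqrt (x j ^ m) * Real.sqrt (x (s+1-j) ^ m))]
      refine Finset.sum_congr rfl fun j _ => ?_
      have hj : j.val < s := j.isLt
      rw [show (Fin.rev j).val + 1 = s + 1 - (j.val + 1) by simp only [Fin.rev]; omega]
      rw [Real.sqrt_mul (hxnn (j.val+1)
        (by simp only [Finset.mem_Icc]; exact ⟨Nat.le_add_left 1 _, hj⟩))]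
    rw [hSfin] at H
    exact H
  -- coordinate symmetry
  set C : ℕ := ∑ k ∈ F, Nat.multinomial Finset.univ k * k i0 with hC
  clear_value C
  have hCj : ∀ j : Fin s, ∑ k ∈ F, (Nat.multinomial Finset.univ k : ℝ) * (k j : ℝ) = (C:ℝ) := by
    intro j
    have := sym_sum s m j i0
    rw [hC]
    exact_mod_cast congrArg (Nat.cast : ℕ → ℝ) this
  have hΩnat : Ω = ((∑ k ∈ F, Nat.multinomial Finset.univ k : ℕ) : ℝ) := by
    rw [hΩ]; push_cast; rfl
  have hCreal : (s:ℝ) * (C:ℝ) = Ω * m := by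
    have hsC : s * C = (∑ k ∈ F, Nat.multinomial Finset.univ k) * m := by
      have h1 : ∑ i : Fin s, ∑ k ∈ F, Nat.multinomial Finset.univ k * k i = s * C := by
        rw [Finset.sum_congr rfl (fun i _ => sym_sum s m i i0), ← hC]
        simp [Finset.card_univ, mul_comm]
      rw [← h1, Finset.sum_comm, Finset.sum_mul]
      refine Finset.sum_congr rfl fun k hk => ?_
      rw [← Finset.mul_sum]
      congr 1
      simp only [hF, Finset.mem_filter, Finset.Nat.mem_antidiagonalTuple] at hk
      exact hk.1
    rw [hΩnat]
    exact_mod_cast congrArg (Nat.cast : ℕ → ℝ) hsC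
  set Q := ∑ k ∈ F, (Nat.multinomial Finset.univ k : ℝ) * ∏ j : Fin s, x (j.val + 1) ^ k j
    with hQdef
  have hMD : ∑ k ∈ F, (Nat.multinomial Finset.univ k : ℝ) *
      (∑ j : Fin s, ((k j : ℝ) - 1) * x (j.val+1) ^ m) = ((C:ℝ) - Ω) * A := by
    have h1 : ∀ k ∈ F, (Nat.multinomial Finset.univ k : ℝ) *
        (∑ j : Fin s, ((k j : ℝ) - 1) * x (j.val+1) ^ m) =
        ∑ j : Fin s, (Nat.multinomial Finset.univ k : ℝ) * (((k j : ℝ) - 1) * x (j.val+1) ^ m) :=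
      fun k _ => Finset.mul_sum _ _ _
    rw [Finset.sum_congr rfl h1, Finset.sum_comm]
    have h2 : ∀ j : Fin s, ∑ k ∈ F, (Nat.multinomial Finset.univ k : ℝ) *
        (((k j : ℝ) - 1) * x (j.val+1) ^ m) = ((C:ℝ) - Ω) * x (j.val+1) ^ m := by
      intro j
      have e1 : ∑ k ∈ F, (Nat.multinomial Finset.univ k : ℝ) * (((k j : ℝ) - 1) * x (j.val+1) ^ m)
          = (∑ k ∈ F, (Nat.multinomial Finset.univ k : ℝ) * ((k j : ℝ) - 1)) * x (j.val+1) ^ m := by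
        rw [Finset.sum_mul]
        exact Finset.sum_congr rfl fun k _ => by ring
      have e2 : ∑ k ∈ F, (Nat.multinomial Finset.univ k : ℝ) * ((k j : ℝ) - 1) =
          (∑ k ∈ F, (Nat.multinomial Finset.univ k : ℝ) * (k j : ℝ)) -
          ∑ k ∈ F, (Nat.multinomial Finset.univ k : ℝ) := by
        rw [← Finset.sum_sub_distrib]
        exact Finset.sum_congr rfl fun k _ => by ring
      rw [e1, e2, hCj j, ← hΩ]
    rw [Finset.sum_congr rfl fun j _ => h2 j, ← Finset.mul_sum]
    congr 1
    rw [hA, sum_Icc_eq_sum_fin s (fun j => x j ^ m)]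
  have hQle : Q ≤ (1/(m:ℝ)) * (((C:ℝ) - Ω) * A + Ω * (A - T)) := by
    have step1 : Q ≤ ∑ k ∈ F, (Nat.multinomial Finset.univ k : ℝ) *
        ((1/(m:ℝ)) * ((∑ j : Fin s, ((k j : ℝ) - 1) * x (j.val+1) ^ m) + S)) := by
      rw [hQdef]
      exact Finset.sum_le_sum fun k hk =>
        mul_le_mul_of_nonneg_left (hperk k hk) (Nat.cast_nonneg _)
    refine step1.trans (le_of_eq ?_)
    have e1 : ∀ k ∈ F, (Nat.multinomial Finset.univ k : ℝ) *
        ((1/(m:ℝ)) * ((∑ j : Fin s, ((k j : ℝ) - 1) * x (j.val+1) ^ m) + S)) =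
        (1/(m:ℝ)) * ((Nat.multinomial Finset.univ k : ℝ) *
          (∑ j : Fin s, ((k j : ℝ) - 1) * x (j.val+1) ^ m) +
          (Nat.multinomial Finset.univ k : ℝ) * S) := fun k _ => by ring
    rw [Finset.sum_congr rfl e1, ← Finset.mul_sum, Finset.sum_add_distrib, hMD,
      ← Finset.sum_mul, ← hΩ, hSAT]
  -- conclusion
  rw [ge_iff_le]
  have hAQ : (s:ℝ)/Ω * Q ≤ (s:ℝ)/Ω * ((1/(m:ℝ)) * (((C:ℝ) - Ω) * A + Ω * (A - T))) :=
    mul_le_mul_of_nonneg_left hQle (by positivity)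
  have hEq : (s:ℝ)/Ω * ((1/(m:ℝ)) * (((C:ℝ) - Ω) * A + Ω * (A - T))) = A - (s/m) * T := by
    have hs' : (s:ℝ) ≠ 0 := Nat.cast_ne_zero.mpr hs0.ne'
    field_simp
    linear_combination A * hCreal
  rw [hEq] at hAQ
  linarith
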